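/- For all integers n and k with 0 ≤ k ≤ n, Σ_{π ∈ OP(n,k)} q^{LOS(π)} = [k]!·S_q[n,k], where LOS(π) = los(π) + C(k,2). -/

import Mathlib

/-- The indeterminate `q`, as an element of the field of rational functions over `ℚ`. -/
noncomputable def qq : RatFunc ℚ := RatFunc.X

/-- The q-integer `[m] = 1 + q + ⋯ + q^(m-1)`. -/
noncomputable def qint (m : ℕ) : RatFunc ℚ := ∑ j ∈ Finset.range m, qq ^ j

/-- The q-factorial `[m]! = [m][m-1]⋯[1]`, with `[0]! = 1`. -/
noncomputable def qfac : ℕ → RatFunc ℚ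
  | 0 => 1
  | m + 1 => qint (m + 1) * qfac m

/-- The Gaussian binomial coefficient `[a]!/([b]!·[a-b]!)` (zero if `b > a`). -/
noncomputable def qbinom (a b : ℕ) : RatFunc ℚ :=
  if b ≤ a then qfac a / (qfac b * qfac (a - b)) else 0

/-- The q-Stirling number of the second kind. -/
noncomputable def qStirling (n k : ℕ) : RatFunc ℚ :=
  if k ≤ n then
    (∑ i ∈ Finset.range (k + 1),
      (-1 : RatFunc ℚ) ^ i * qbinom k i * qq ^ Nat.choose i 2 * qint (k - i) ^ n) / qfac k
  else 0

/-- Ordered partitions of `{1,…,n}` (encoded as `Fin n`) into `k` blocks: sequences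
`(B_1,…,B_k)` of pairwise disjoint nonempty subsets whose union is everything, i.e.
every letter lies in exactly one block. -/
def OP (n k : ℕ) : Finset (Fin k → Finset (Fin n)) :=
  Finset.univ.filter fun B =>
    (∀ j, (B j).Nonempty) ∧ ∀ x : Fin n, ∃ j, x ∈ B j ∧ ∀ j', x ∈ B j' → j' = j

/-- `ros(π)`: the number of pairs `(i,j)` of letters with `j < i`, `j` the opener
(least element) of its block, and the block of `j` strictly to the right of the
block of `i`. -/
def ros {n k : ℕ} (B : Fin k → Finset (Fin n)) : ℕ :=
  ((Finset.univ : Finset (Fin n × Fin n)).filter fun ij =>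
    ij.2 < ij.1 ∧ ∃ a b : Fin k, ij.1 ∈ B a ∧ ij.2 ∈ B b ∧ (B b).min = ↑ij.2 ∧ a < b).card

/-- `rcb(π)`: pairs `(i,j)` with `j > i`, `j` the closer (greatest element) of its block,
and the block of `j` strictly to the right of the block of `i`. -/
def rcb {n k : ℕ} (B : Fin k → Finset (Fin n)) : ℕ :=
  ((Finset.univ : Finset (Fin n × Fin n)).filter fun ij =>
    ij.1 < ij.2 ∧ ∃ a b : Fin k, ij.1 ∈ B a ∧ ij.2 ∈ B b ∧ (B b).max = ↑ij.2 ∧ a < b).card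

/-- `los(π)`: pairs `(i,j)` with `j < i`, `j` the opener of its block, and the block of
`j` strictly to the left of the block of `i`. -/
def los {n k : ℕ} (B : Fin k → Finset (Fin n)) : ℕ :=
  ((Finset.univ : Finset (Fin n × Fin n)).filter fun ij =>
    ij.2 < ij.1 ∧ ∃ a b : Fin k, ij.1 ∈ B a ∧ ij.2 ∈ B b ∧ (B b).min = ↑ij.2 ∧ b < a).card

/-- `lcb(π)`: pairs `(i,j)` with `j > i`, `j` the closer of its block, and the block of
`j` strictly to the left of the block of `i`. -/
def lcb {n k : ℕ} (B : Fin k → Finset (Fin n)) : ℕ :=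
  ((Finset.univ : Finset (Fin n × Fin n)).filter fun ij =>
    ij.1 < ij.2 ∧ ∃ a b : Fin k, ij.1 ∈ B a ∧ ij.2 ∈ B b ∧ (B b).max = ↑ij.2 ∧ b < a).card

open Finset

lemma qint_ne_zero {m : ℕ} (hm : 0 < m) : qint m ≠ 0 := by
  have : qint m = algebraMap (Polynomial ℚ) (RatFunc ℚ) (∑ j ∈ range m, Polynomial.X ^ j) := by
    simp [qint, qq, map_sum, RatFunc.algebraMap_X]
  rw [this]
  simp only [ne_eq, FaithfulSMul.algebraMap_eq_zero_iff]
  intro h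
  have := congrArg (Polynomial.eval 1) h
  simp [Polynomial.eval_finset_sum] at this
  omega

lemma qfac_ne_zero (m : ℕ) : qfac m ≠ 0 := by
  induction m with
  | zero => simp [qfac]
  | succ m ih => exact mul_ne_zero (qint_ne_zero m.succ_pos) ih

lemma qint_add (a b : ℕ) : qint (a + b) = qint a + qq ^ a * qint b := by
  simp only [qint, Finset.sum_range_add, mul_sum, pow_add]

lemma qint_split {i k : ℕ} (h : i ≤ k) : qint k = qint (k - i) + qq ^ (k - i) * qint i := by
  conv_lhs => rw [show k = (k - i) + i by omega]
  exact qint_add _ _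

/-- [k+1 choose i+1]·[i+1] = [k+1]·[k choose i] -/
lemma qbinom_mul_qint {k i : ℕ} (h : i ≤ k) :
    qbinom (k + 1) (i + 1) * qint (i + 1) = qint (k + 1) * qbinom k i := by
  rw [qbinom, qbinom, if_pos (by omega), if_pos h]
  have h1 : k + 1 - (i + 1) = k - i := by omega
  rw [h1]
  have e1 : qfac (k + 1) = qint (k + 1) * qfac k := rfl
  have e2 : qfac (i + 1) = qint (i + 1) * qfac i := rfl
  have A := qfac_ne_zero i
  have B := qfac_ne_zero (k - i)
  have C : qint (i + 1) ≠ 0 := qint_ne_zero (by omega)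
  rw [e1, e2]
  field_simp

/-- Pascal: [k+1 choose i+1] = q^(i+1)·[k choose i+1] + [k choose i]. -/
lemma qbinom_pascal {k i : ℕ} (h : i ≤ k) :
    qbinom (k + 1) (i + 1) = qq ^ (i + 1) * qbinom k (i + 1) + qbinom k i := by
  rcases eq_or_lt_of_le h with rfl | hlt
  · rw [qbinom, qbinom, qbinom, if_pos le_rfl, if_neg (by omega), if_pos le_rfl]
    simp only [Nat.sub_self, mul_zero, zero_add, qfac]
    rw [mul_one, mul_one]
    rw [div_self (mul_ne_zero (qint_ne_zero (by omega)) (qfac_ne_zero i)), div_self (qfac_ne_zero i)]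
  · have hi1 : i + 1 ≤ k := hlt
    rw [qbinom, qbinom, qbinom, if_pos (by omega), if_pos hi1, if_pos h]
    have h1 : k + 1 - (i + 1) = (k - (i+1)) + 1 := by omega
    have h2 : k - i = (k - (i+1)) + 1 := by omega
    rw [h1, h2]
    have e1 : qfac (k + 1) = qint (k + 1) * qfac k := rfl
    have e2 : qfac (i + 1) = qint (i + 1) * qfac i := rfl
    have e3 : qfac ((k - (i+1)) + 1) = qint ((k - (i+1)) + 1) * qfac (k - (i+1)) := rfl
    have key : qint (k + 1) = qint (i + 1) + qq ^ (i + 1) * qint ((k - (i+1)) + 1) := by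
      have := qint_add (i + 1) (k - i)
      rw [show i + 1 + (k - i) = k + 1 by omega] at this
      rw [this, h2]
    have A := qfac_ne_zero i
    have B := qfac_ne_zero (k - (i+1))
    have C : qint (i + 1) ≠ 0 := qint_ne_zero (by omega)
    have D : qint ((k - (i+1)) + 1) ≠ 0 := qint_ne_zero (by omega)
    rw [e1, e2, e3, key]
    field_simp
    ring

lemma qbinom_zero_right (k : ℕ) : qbinom k 0 = 1 := by
  rw [qbinom, if_pos (Nat.zero_le _)]
  simp [qfac, div_self (qfac_ne_zero k)]

lemma qbinom_of_gt {k i : ℕ} (h : k < i) : qbinom k i = 0 := by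
  rw [qbinom, if_neg (by omega)]

lemma altsum (k : ℕ) :
    ∑ i ∈ range (k + 2), (-1 : RatFunc ℚ) ^ i * qbinom (k + 1) i * qq ^ i.choose 2 = 0 := by
  have step : ∀ j ∈ range (k + 1),
      (-1 : RatFunc ℚ) ^ (j + 1) * qbinom (k + 1) (j + 1) * qq ^ (j + 1).choose 2
        = (fun i => (-1 : RatFunc ℚ) ^ i * qbinom k i * qq ^ (i.choose 2 + i)) (j + 1)
          - (fun i => (-1 : RatFunc ℚ) ^ i * qbinom k i * qq ^ (i.choose 2 + i)) j := by
    intro j hj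
    rw [qbinom_pascal (Nat.lt_succ_iff.mp (mem_range.mp hj))]
    have c1 : (j + 1).choose 2 = j.choose 2 + j := by
      rw [show (2:ℕ) = 1 + 1 from rfl, Nat.choose_succ_succ', Nat.choose_one_right]; omega
    simp only [c1, pow_succ, pow_add]
    ring
  rw [Finset.sum_range_succ', Finset.sum_congr rfl step]
  beta_reduce
  rw [Finset.sum_range_sub (fun i => (-1 : RatFunc ℚ) ^ i * qbinom k i * qq ^ (i.choose 2 + i))]
  simp [qbinom_zero_right, qbinom_of_gt (Nat.lt_succ_self k)]

noncomputable def T (n k : ℕ) : RatFunc ℚ :=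
  ∑ i ∈ range (k + 1), (-1 : RatFunc ℚ) ^ i * qbinom k i * qq ^ i.choose 2 * qint (k - i) ^ n

lemma qint_zero : qint 0 = 0 := by simp [qint]

lemma T_zero_right (n : ℕ) : T n 0 = if n = 0 then 1 else 0 := by
  rw [T]
  simp [qbinom_zero_right, qint_zero, pow_eq_zero_iff', zero_pow_eq]

lemma T_zero_left (k : ℕ) : T 0 k = if k = 0 then 1 else 0 := by
  rcases k with _ | k
  · simp [T_zero_right]
  · rw [T, if_neg (Nat.succ_ne_zero k)]
    have := altsum k
    rw [← this]
    exact Finset.sum_congr rfl fun i _ => by rw [pow_zero, mul_one]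

lemma T_rec (n k : ℕ) : T (n + 1) (k + 1) = qint (k + 1) * (T n (k + 1) + qq ^ k * T n k) := by
  have expand : ∀ i ∈ range (k + 2),
      (-1 : RatFunc ℚ) ^ i * qbinom (k + 1) i * qq ^ i.choose 2 * qint (k + 1 - i) ^ (n + 1)
      = qint (k + 1) * ((-1 : RatFunc ℚ) ^ i * qbinom (k + 1) i * qq ^ i.choose 2 * qint (k + 1 - i) ^ n)
        - (-1 : RatFunc ℚ) ^ i * (qbinom (k + 1) i * qint i) * qq ^ (i.choose 2 + (k + 1 - i)) * qint (k + 1 - i) ^ n := by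
    intro i hi
    have hik : i ≤ k + 1 := Nat.lt_succ_iff.mp (mem_range.mp hi)
    have hsplit : qint (k + 1) = qint (k + 1 - i) + qq ^ (k + 1 - i) * qint i := qint_split hik
    rw [pow_succ, pow_add, hsplit]
    ring
  rw [T, Finset.sum_congr rfl expand, Finset.sum_sub_distrib, ← Finset.mul_sum, ← T]
  have shift : ∑ i ∈ range (k + 2),
      (-1 : RatFunc ℚ) ^ i * (qbinom (k + 1) i * qint i) * qq ^ (i.choose 2 + (k + 1 - i)) * qint (k + 1 - i) ^ n
      = - (qint (k + 1) * (qq ^ k * T n k)) := by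
    rw [Finset.sum_range_succ']
    have main : ∀ j ∈ range (k + 1),
        (-1 : RatFunc ℚ) ^ (j + 1) * (qbinom (k + 1) (j + 1) * qint (j + 1)) * qq ^ ((j + 1).choose 2 + (k + 1 - (j + 1))) * qint (k + 1 - (j + 1)) ^ n
        = - (qint (k + 1) * (qq ^ k * ((-1 : RatFunc ℚ) ^ j * qbinom k j * qq ^ j.choose 2 * qint (k - j) ^ n))) := by
      intro j hj
      have hjk : j ≤ k := Nat.lt_succ_iff.mp (mem_range.mp hj)
      rw [qbinom_mul_qint hjk]
      have c1 : (j + 1).choose 2 + (k + 1 - (j + 1)) = j.choose 2 + k := by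
        rw [show (2:ℕ) = 1 + 1 from rfl, Nat.choose_succ_succ', Nat.choose_one_right]; omega
      have c2 : k + 1 - (j + 1) = k - j := by omega
      rw [c1, c2, pow_succ, pow_add]
      ring
    rw [Finset.sum_congr rfl main, qint_zero]
    simp only [T, Finset.mul_sum, ← Finset.sum_neg_distrib]
    ring
  rw [shift]
  ring

def losf {n k : ℕ} (f : Fin n → Fin k) : ℕ :=
  ((Finset.univ : Finset (Fin n × Fin n)).filter fun ij =>
    ij.2 < ij.1 ∧ (∀ t, t < ij.2 → f t ≠ f ij.2) ∧ f ij.2 < f ij.1).card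

def Surj (n k : ℕ) : Finset (Fin n → Fin k) :=
  Finset.univ.filter fun f => Function.Surjective f

lemma finset_min_eq_iff {α : Type*} [LinearOrder α] {s : Finset α} {x : α} :
    s.min = (x : WithTop α) ↔ x ∈ s ∧ ∀ y ∈ s, x ≤ y := by
  constructor
  · intro h
    refine ⟨Finset.mem_of_min h, fun y hy => ?_⟩
    have := Finset.min_le hy
    rw [h] at this
    exact WithTop.coe_le_coe.mp this
  · rintro ⟨hx, hmin⟩
    refine le_antisymm ?_ ?_
    · exact Finset.min_le hx
    · exact Finset.le_min fun y hy => WithTop.coe_le_coe.mpr (hmin y hy)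

lemma los_fibers {n k : ℕ} (f : Fin n → Fin k) :
    los (fun j => Finset.univ.filter fun x => f x = j) = losf f := by
  unfold los losf
  congr 1
  apply Finset.filter_congr
  intro ij _
  simp only [Finset.mem_filter, Finset.mem_univ, true_and]
  constructor
  · rintro ⟨hlt, a, b, h1, h2, hmin, hba⟩
    rw [finset_min_eq_iff] at hmin
    refine ⟨hlt, fun t ht hft => ?_, ?_⟩
    · have := hmin.2 t (by simp [hft, h2])
      exact absurd this (not_le.mpr ht)
    · rw [h1, h2]; exact hba
  · rintro ⟨hlt, hop, hba⟩
    refine ⟨hlt, f ij.1, f ij.2, rfl, rfl, ?_, hba⟩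
    rw [finset_min_eq_iff]
    refine ⟨by simp, fun y hy => ?_⟩
    simp only [Finset.mem_filter, Finset.mem_univ, true_and] at hy
    by_contra hle
    exact hop y (not_le.mp hle) hy

lemma sum_OP_eq_sum_Surj (n k c : ℕ) :
    ∑ B ∈ OP n k, qq ^ (los B + c) = ∑ f ∈ Surj n k, qq ^ (losf f + c) := by
  refine (Finset.sum_bij (fun f (_ : f ∈ Surj n k) =>
    (fun j => Finset.univ.filter fun x => f x = j)) ?_ ?_ ?_ ?_).symm
  · intro f hf
    rw [Surj, Finset.mem_filter] at hf
    rw [OP, Finset.mem_filter]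
    refine ⟨Finset.mem_univ _, fun j => ?_, fun x => ⟨f x, by simp, fun j' hj' => ?_⟩⟩
    · obtain ⟨x, hx⟩ := hf.2 j
      exact ⟨x, by simp [hx]⟩
    · exact (by simpa using hj' : f x = j').symm
  · intro f hf f' hf' h
    funext x
    have h2 : (Finset.univ.filter fun y => f y = f x) = (Finset.univ.filter fun y => f' y = f x) :=
      congrFun h (f x)
    have hx : x ∈ Finset.univ.filter fun y => f y = f x := by simp
    rw [h2] at hx
    exact (by simpa using hx : f' x = f x).symm
  · intro B hB
    rw [OP, Finset.mem_filter] at hB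
    set f : Fin n → Fin k := fun x => (hB.2.2 x).choose with hfdef
    have hfx : ∀ x, x ∈ B (f x) ∧ ∀ j', x ∈ B j' → j' = f x := fun x => (hB.2.2 x).choose_spec
    have hfib : ∀ j, B j = Finset.univ.filter fun x => f x = j := by
      intro j
      ext x
      simp only [Finset.mem_filter, Finset.mem_univ, true_and]
      constructor
      · intro hx; exact ((hfx x).2 j hx).symm
      · intro hx; rw [← hx]; exact (hfx x).1
    refine ⟨f, ?_, ?_⟩
    · rw [Surj, Finset.mem_filter]
      refine ⟨Finset.mem_univ _, fun j => ?_⟩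
      obtain ⟨x, hx⟩ := hB.2.1 j
      exact ⟨x, ((hfx x).2 j hx).symm⟩
    · funext j; exact (hfib j).symm
  · intro f hf
    rw [los_fibers]

lemma losf_snoc {n m : ℕ} (f : Fin (n + 1) → Fin m) :
    losf f = losf (fun x : Fin n => f x.castSucc)
      + (Finset.univ.filter fun x : Fin n =>
          (∀ t, t < x → f t.castSucc ≠ f x.castSucc) ∧ f x.castSucc < f (Fin.last n)).card := by
  have op_iff : ∀ j : Fin n,
      (∀ t : Fin (n + 1), t < j.castSucc → f t ≠ f j.castSucc) ↔
      (∀ t : Fin n, t < j → f t.castSucc ≠ f j.castSucc) := by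
    intro j
    constructor
    · intro h t ht
      exact h t.castSucc (Fin.castSucc_lt_castSucc_iff.mpr ht)
    · intro h t ht
      have hne : t ≠ Fin.last n := by
        intro heq
        rw [heq] at ht
        exact absurd (le_of_lt ht) (not_le.mpr (Fin.castSucc_lt_last j))
      obtain ⟨y, rfl⟩ := Fin.exists_castSucc_eq.mpr hne
      exact h y (Fin.castSucc_lt_castSucc_iff.mp ht)
  unfold losf
  rw [Finset.card_filter, Finset.card_filter, Finset.card_filter, Fintype.sum_prod_type,
    Fintype.sum_prod_type]
  simp only [Fin.sum_univ_castSucc]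
  have e1 : ∀ i j : Fin n,
      (if (Fin.castSucc j) < (Fin.castSucc i)
          ∧ (∀ t, t < Fin.castSucc j → f t ≠ f (Fin.castSucc j))
          ∧ f (Fin.castSucc j) < f (Fin.castSucc i) then (1:ℕ) else 0)
      = (if j < i ∧ (∀ t, t < j → f t.castSucc ≠ f j.castSucc)
          ∧ f j.castSucc < f i.castSucc then (1:ℕ) else 0) := by
    intro i j
    refine if_congr ?_ rfl rfl
    rw [Fin.castSucc_lt_castSucc_iff]
    exact and_congr_right fun _ => and_congr_left fun _ => op_iff j
  have e2 : ∀ i : Fin n,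
      (if Fin.last n < Fin.castSucc i
          ∧ (∀ t, t < Fin.last n → f t ≠ f (Fin.last n))
          ∧ f (Fin.last n) < f (Fin.castSucc i) then (1:ℕ) else 0) = 0 := by
    intro i
    rw [if_neg]
    rintro ⟨h, -⟩
    exact absurd (Fin.castSucc_lt_last i) (not_lt.mpr (le_of_lt h))
  have e3 : ∀ j : Fin n,
      (if Fin.castSucc j < Fin.last n
          ∧ (∀ t, t < Fin.castSucc j → f t ≠ f (Fin.castSucc j))
          ∧ f (Fin.castSucc j) < f (Fin.last n) then (1:ℕ) else 0)
      = (if (∀ t, t < j → f t.castSucc ≠ f j.castSucc)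
          ∧ f j.castSucc < f (Fin.last n) then (1:ℕ) else 0) := by
    intro j
    refine if_congr ?_ rfl rfl
    rw [and_iff_right (Fin.castSucc_lt_last j)]
    exact and_congr_left fun _ => op_iff j
  have e4 : (if Fin.last n < Fin.last n
      ∧ (∀ t, t < Fin.last n → f t ≠ f (Fin.last n))
      ∧ f (Fin.last n) < f (Fin.last n) then (1:ℕ) else 0) = 0 := by
    rw [if_neg]; rintro ⟨h, -⟩; exact lt_irrefl _ h
  simp only [e1, e2, e3, e4, add_zero, Finset.sum_const_zero]

lemma opcount {n m : ℕ} (f : Fin n → Fin m) (a : Fin m) (h : ∀ v : Fin m, v < a → ∃ x, f x = v) :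
    (Finset.univ.filter fun x : Fin n => (∀ t, t < x → f t ≠ f x) ∧ f x < a).card = (a : ℕ) := by
  rw [← Fin.card_Iio (b := a)]
  refine Finset.card_bij (fun x _ => f x) ?_ ?_ ?_
  · intro x hx
    rw [Finset.mem_Iio]
    exact ((Finset.mem_filter.mp hx).2).2
  · intro x₁ hx₁ x₂ hx₂ heq
    have h1 := (Finset.mem_filter.mp hx₁).2.1
    have h2 := (Finset.mem_filter.mp hx₂).2.1
    rcases lt_trichotomy x₁ x₂ with hlt | heq' | hgt
    · exact absurd heq (h2 x₁ hlt)
    · exact heq'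
    · exact absurd heq.symm (h1 x₂ hgt)
  · intro v hv
    rw [Finset.mem_Iio] at hv
    obtain ⟨x, hx⟩ := h v hv
    have hne : (Finset.univ.filter fun y : Fin n => f y = v).Nonempty := ⟨x, by simp [hx]⟩
    set x₀ := (Finset.univ.filter fun y : Fin n => f y = v).min' hne with hx₀
    have hmem := (Finset.univ.filter fun y : Fin n => f y = v).min'_mem hne
    have hfx₀ : f x₀ = v := (Finset.mem_filter.mp hmem).2
    refine ⟨x₀, Finset.mem_filter.mpr ⟨Finset.mem_univ _, fun t ht hft => ?_, by rw [hfx₀]; exact hv⟩, hfx₀⟩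
    have : x₀ ≤ t := Finset.min'_le _ _ (by simp [hft, hfx₀])
    exact absurd this (not_le.mpr ht)

lemma losf_comp_succAbove {n k : ℕ} (a : Fin (k + 1)) (g : Fin n → Fin k) :
    losf (fun x => a.succAbove (g x)) = losf g := by
  unfold losf
  congr 1
  apply Finset.filter_congr
  intro ij _
  have inj : Function.Injective a.succAbove := Fin.succAbove_right_injective
  constructor
  · rintro ⟨h1, h2, h3⟩
    exact ⟨h1, fun t ht hgt => h2 t ht (congrArg a.succAbove hgt),
      Fin.succAbove_lt_succAbove_iff.mp h3⟩
  · rintro ⟨h1, h2, h3⟩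
    exact ⟨h1, fun t ht hgt => h2 t ht (inj hgt),
      Fin.succAbove_lt_succAbove_iff.mpr h3⟩

lemma snoc_surj_of_surj {n k : ℕ} (a : Fin (k + 1)) (f' : Fin n → Fin (k + 1))
    (hf : Function.Surjective f') : Function.Surjective (Fin.snoc f' a : Fin (n+1) → Fin (k+1)) := by
  intro v
  obtain ⟨x, hx⟩ := hf v
  exact ⟨x.castSucc, by rwa [Fin.snoc_castSucc]⟩

lemma snoc_succAbove_surj {n k : ℕ} (a : Fin (k + 1)) (g : Fin n → Fin k)
    (hg : Function.Surjective g) :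
    Function.Surjective (Fin.snoc (fun x => a.succAbove (g x)) a : Fin (n+1) → Fin (k+1)) := by
  intro v
  by_cases hv : v = a
  · exact ⟨Fin.last n, by rw [Fin.snoc_last, hv]⟩
  · set w := (finSuccAboveEquiv a).symm ⟨v, hv⟩ with hw
    have hsw : a.succAbove w = v := by
      have := (finSuccAboveEquiv a).apply_symm_apply ⟨v, hv⟩
      rw [finSuccAboveEquiv_apply] at this
      exact congrArg Subtype.val this
    obtain ⟨x, hx⟩ := hg w
    exact ⟨x.castSucc, by rw [Fin.snoc_castSucc, hx, hsw]⟩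

lemma surj_rec (n k : ℕ) :
    ∑ f ∈ Surj (n + 1) (k + 1), qq ^ losf f
      = qint (k + 1) * ((∑ f ∈ Surj n (k + 1), qq ^ losf f) + ∑ f ∈ Surj n k, qq ^ losf f) := by
  classical
  set F : (Fin (k+1) × (Fin n → Fin (k+1))) ⊕ (Fin (k+1) × (Fin n → Fin k)) → (Fin (n+1) → Fin (k+1)) :=
    Sum.elim (fun p => Fin.snoc p.2 p.1) (fun p => Fin.snoc (fun x => p.1.succAbove (p.2 x)) p.1) with hF
  set Dom := ((Finset.univ : Finset (Fin (k+1))) ×ˢ Surj n (k+1)).disjSum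
    ((Finset.univ : Finset (Fin (k+1))) ×ˢ Surj n k) with hDom
  have hstep : ∑ d ∈ Dom, qq ^ losf (F d) = ∑ f ∈ Surj (n + 1) (k + 1), qq ^ losf f := by
    refine (Finset.sum_bij (fun d (_ : d ∈ Dom) => F d) ?_ ?_ ?_ ?_)
    · rintro (⟨a, f'⟩ | ⟨a, g⟩) hd
      · rw [hDom, Finset.inl_mem_disjSum, Finset.mem_product] at hd
        have hf' := (Finset.mem_filter.mp hd.2).2
        exact Finset.mem_filter.mpr ⟨Finset.mem_univ _, snoc_surj_of_surj a f' hf'⟩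
      · rw [hDom, Finset.inr_mem_disjSum, Finset.mem_product] at hd
        have hg := (Finset.mem_filter.mp hd.2).2
        exact Finset.mem_filter.mpr ⟨Finset.mem_univ _, snoc_succAbove_surj a g hg⟩
    · rintro (⟨a, f'⟩ | ⟨a, g⟩) hd (⟨a', f''⟩ | ⟨a', g'⟩) hd' heq
      · have ha : a = a' := by
          have := congrFun heq (Fin.last n)
          simpa [hF, Fin.snoc_last] using this
        have hf : f' = f'' := by
          funext x
          have := congrFun heq x.castSucc
          simpa [hF, Fin.snoc_castSucc] using this
        rw [ha, hf]
      · exfalso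
        rw [hDom, Finset.inl_mem_disjSum, Finset.mem_product] at hd
        have hf' := (Finset.mem_filter.mp hd.2).2
        have ha : a = a' := by
          have := congrFun heq (Fin.last n)
          simpa [hF, Fin.snoc_last] using this
        obtain ⟨x, hx⟩ := hf' a'
        have := congrFun heq x.castSucc
        simp only [hF, Sum.elim_inl, Sum.elim_inr, Fin.snoc_castSucc] at this
        exact Fin.succAbove_ne a' (g' x) (hx.symm.trans this).symm
      · exfalso
        rw [hDom, Finset.inl_mem_disjSum, Finset.mem_product] at hd'
        have hf'' := (Finset.mem_filter.mp hd'.2).2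
        obtain ⟨x, hx⟩ := hf'' a
        have := congrFun heq x.castSucc
        simp only [hF, Sum.elim_inl, Sum.elim_inr, Fin.snoc_castSucc] at this
        exact Fin.succAbove_ne a (g x) (this.trans hx)
      · have ha : a = a' := by
          have := congrFun heq (Fin.last n)
          simpa [hF, Fin.snoc_last] using this
        subst ha
        have hg : g = g' := by
          funext x
          have := congrFun heq x.castSucc
          simp only [hF, Sum.elim_inr, Fin.snoc_castSucc] at this
          exact Fin.succAbove_right_injective this
        rw [hg]
    · intro f hf
      have hsurj := (Finset.mem_filter.mp hf).2
      set a := f (Fin.last n) with ha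
      by_cases hs : Function.Surjective (Fin.init f)
      · refine ⟨Sum.inl (a, Fin.init f), ?_, ?_⟩
        · rw [hDom, Finset.inl_mem_disjSum, Finset.mem_product]
          exact ⟨Finset.mem_univ _, Finset.mem_filter.mpr ⟨Finset.mem_univ _, hs⟩⟩
        · simp only [hF, Sum.elim_inl]
          exact Fin.snoc_init_self f
      · have hne : ∀ x : Fin n, Fin.init f x ≠ a := by
          intro x hx
          apply hs
          intro v
          by_cases hv : v = a
          · exact ⟨x, hx.trans hv.symm⟩
          · obtain ⟨y, hy⟩ := hsurj v
            have hyne : y ≠ Fin.last n := fun h => hv (by rw [← hy, h, ← ha])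
            obtain ⟨z, rfl⟩ := Fin.exists_castSucc_eq.mpr hyne
            exact ⟨z, hy⟩
        set g : Fin n → Fin k := fun x => (finSuccAboveEquiv a).symm ⟨Fin.init f x, hne x⟩ with hg
        have hcomp : ∀ x, a.succAbove (g x) = Fin.init f x := by
          intro x
          have := (finSuccAboveEquiv a).apply_symm_apply ⟨Fin.init f x, hne x⟩
          rw [finSuccAboveEquiv_apply] at this
          exact congrArg Subtype.val this
        have hgsurj : Function.Surjective g := by
          intro w
          have hvne : a.succAbove w ≠ a := Fin.succAbove_ne a w
          obtain ⟨y, hy⟩ := hsurj (a.succAbove w)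
          have hyne : y ≠ Fin.last n := fun h => hvne (by rw [← hy, h, ← ha])
          obtain ⟨z, rfl⟩ := Fin.exists_castSucc_eq.mpr hyne
          refine ⟨z, ?_⟩
          have : a.succAbove (g z) = a.succAbove w := by
            rw [hcomp z]; exact hy
          exact Fin.succAbove_right_injective this
        refine ⟨Sum.inr (a, g), ?_, ?_⟩
        · rw [hDom, Finset.inr_mem_disjSum, Finset.mem_product]
          exact ⟨Finset.mem_univ _, Finset.mem_filter.mpr ⟨Finset.mem_univ _, hgsurj⟩⟩
        · simp only [hF, Sum.elim_inr]
          have : (fun x => a.succAbove (g x)) = Fin.init f := funext hcomp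
          rw [this, ha]
          exact Fin.snoc_init_self f
    · intro d hd
      rfl
  rw [← hstep, hDom, Finset.sum_disjSum, Finset.sum_product, Finset.sum_product]
  have hsum_a : ∑ a : Fin (k + 1), (qq : RatFunc ℚ) ^ (a : ℕ) = qint (k + 1) := by
    rw [qint, ← Fin.sum_univ_eq_sum_range]
  have left : ∀ a : Fin (k + 1), ∑ f' ∈ Surj n (k + 1), qq ^ losf (F (Sum.inl (a, f')))
      = qq ^ (a : ℕ) * ∑ f' ∈ Surj n (k + 1), qq ^ losf f' := by
    intro a
    rw [Finset.mul_sum]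
    refine Finset.sum_congr rfl fun f' hf' => ?_
    have hf's := (Finset.mem_filter.mp hf').2
    have hls := losf_snoc (Fin.snoc f' a : Fin (n + 1) → Fin (k + 1))
    simp only [Fin.snoc_castSucc, Fin.snoc_last] at hls
    have hcard : (Finset.univ.filter fun x : Fin n =>
        (∀ t, t < x → f' t ≠ f' x) ∧ f' x < a).card = (a : ℕ) :=
      opcount f' a fun v hv => hf's v
    rw [hcard] at hls
    have : F (Sum.inl (a, f')) = (Fin.snoc f' a : Fin (n + 1) → Fin (k + 1)) := by
      simp only [hF, Sum.elim_inl]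
    rw [this, hls, pow_add, mul_comm]
  have right : ∀ a : Fin (k + 1), ∑ g ∈ Surj n k, qq ^ losf (F (Sum.inr (a, g)))
      = qq ^ (a : ℕ) * ∑ g ∈ Surj n k, qq ^ losf g := by
    intro a
    rw [Finset.mul_sum]
    refine Finset.sum_congr rfl fun g hg => ?_
    have hgs := (Finset.mem_filter.mp hg).2
    set f' : Fin n → Fin (k + 1) := fun x => a.succAbove (g x) with hf'
    have hls := losf_snoc (Fin.snoc f' a : Fin (n + 1) → Fin (k + 1))
    simp only [Fin.snoc_castSucc, Fin.snoc_last] at hls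
    have hhit : ∀ v : Fin (k + 1), v < a → ∃ x, f' x = v := by
      intro v hv
      have hvne : v ≠ a := ne_of_lt hv
      set w := (finSuccAboveEquiv a).symm ⟨v, hvne⟩ with hw
      have hsw : a.succAbove w = v := by
        have := (finSuccAboveEquiv a).apply_symm_apply ⟨v, hvne⟩
        rw [finSuccAboveEquiv_apply] at this
        exact congrArg Subtype.val this
      obtain ⟨x, hx⟩ := hgs w
      exact ⟨x, by rw [hf']; simp only []; rw [hx, hsw]⟩
    have hcard : (Finset.univ.filter fun x : Fin n =>
        (∀ t, t < x → f' t ≠ f' x) ∧ f' x < a).card = (a : ℕ) := opcount f' a hhit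
    rw [hcard] at hls
    have hFe : F (Sum.inr (a, g)) = (Fin.snoc f' a : Fin (n + 1) → Fin (k + 1)) := by
      simp only [hF, Sum.elim_inr]
      rfl
    have hlosf' : losf f' = losf g := losf_comp_succAbove a g
    rw [hFe, hls, hlosf', pow_add, mul_comm]
  rw [Finset.sum_congr rfl fun a _ => left a, Finset.sum_congr rfl fun a _ => right a,
    ← Finset.sum_mul, ← Finset.sum_mul, hsum_a]
  ring

lemma surj_succ_zero (n : ℕ) : Surj (n + 1) 0 = ∅ := by
  rw [Surj]
  have : (Finset.univ : Finset (Fin (n + 1) → Fin 0)) = ∅ := Finset.univ_eq_empty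
  rw [this, Finset.filter_empty]

lemma surj_zero_succ (k : ℕ) : Surj 0 (k + 1) = ∅ := by
  rw [Surj, Finset.filter_eq_empty_iff]
  intro f _ hf
  obtain ⟨x, -⟩ := hf 0
  exact x.elim0

lemma sum_surj_zero_zero : ∑ f ∈ Surj 0 0, qq ^ losf f = 1 := by
  have h1 : Surj 0 0 = Finset.univ := by
    rw [Surj, Finset.filter_true_of_mem]
    intro f _ b
    exact b.elim0
  rw [h1]
  have : (Finset.univ : Finset (Fin 0 → Fin 0)) = {fun x => x} := by
    apply Finset.eq_singleton_iff_unique_mem.mpr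
    exact ⟨Finset.mem_univ _, fun f _ => funext fun x => x.elim0⟩
  rw [this, Finset.sum_singleton]
  have : losf (fun x : Fin 0 => x) = 0 := by
    rw [losf]
    have : (Finset.univ : Finset (Fin 0 × Fin 0)) = ∅ := Finset.univ_eq_empty
    rw [this, Finset.filter_empty, Finset.card_empty]
  rw [this, pow_zero]

lemma main_all (n : ℕ) : ∀ k : ℕ, qq ^ Nat.choose k 2 * ∑ f ∈ Surj n k, qq ^ losf f = T n k := by
  induction n with
  | zero =>
    intro k
    rcases k with _ | k
    · rw [sum_surj_zero_zero, T_zero_left]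
      simp
    · rw [surj_zero_succ, Finset.sum_empty, T_zero_left]
      simp
  | succ n ih =>
    intro k
    rcases k with _ | k
    · rw [surj_succ_zero, Finset.sum_empty, T_zero_right]
      simp
    · rw [surj_rec, T_rec, ← ih (k + 1), ← ih k]
      have hc : (k + 1).choose 2 = k.choose 2 + k := by
        rw [show (2:ℕ) = 1 + 1 from rfl, Nat.choose_succ_succ', Nat.choose_one_right]; omega
      rw [hc, pow_add]
      ring


/-- `LOS = los + C(k,2)` is Euler-Mahonian on ordered partitions:
`∑_{π ∈ OP(n,k)} q^(LOS π) = [k]!·S_q[n,k]` for `0 ≤ k ≤ n`. -/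
theorem sum_LOS_eq (n k : ℕ) (hkn : k ≤ n) :
    ∑ B ∈ OP n k, qq ^ (los B + Nat.choose k 2) = qfac k * qStirling n k := by
  rw [sum_OP_eq_sum_Surj]
  have h1 : ∑ f ∈ Surj n k, qq ^ (losf f + Nat.choose k 2)
      = qq ^ Nat.choose k 2 * ∑ f ∈ Surj n k, qq ^ losf f := by
    rw [Finset.mul_sum]
    exact Finset.sum_congr rfl fun f _ => by rw [pow_add]; ring
  rw [h1, main_all]
  have hT : qStirling n k = T n k / qfac k := by
    rw [qStirling, if_pos hkn]; rfl
  rw [hT, mul_comm, div_mul_cancel₀ _ (qfac_ne_zero k)]
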